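/- Let ψ : [0,1] → ℝⁿ be continuous on [0,1] and twice differentiable on (0,1) with sup_{x∈(0,1)} ‖(Lψ)(x)‖ < ∞. Then for each i, 1 ≤ i ≤ n, and every x ∈ [0,1]: |ψ_i(x)| ≤ max{ ‖ψ(0)‖, ‖ψ(1)‖, (1/α)·sup_{x∈(0,1)} ‖(Lψ)(x)‖ }. -/

import Mathlib

open Filter Topology


noncomputable def vnorm (n : ℕ) (V : ℕ → ℝ) : ℝ := ⨆ i ∈ Finset.Icc 1 n, |V i|

noncomputable def Lop (n : ℕ) (ε : ℕ → ℝ) (A : ℝ → ℕ → ℕ → ℝ)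
    (ψ : ℝ → ℕ → ℝ) (x : ℝ) (i : ℕ) : ℝ :=
  -(ε i) * iteratedDeriv 2 (fun t => ψ t i) x + ∑ j ∈ Finset.Icc 1 n, A x i j * ψ x j

lemma vnorm_ge (n : ℕ) (V : ℕ → ℝ) {i : ℕ} (hi : i ∈ Finset.Icc 1 n) :
    |V i| ≤ vnorm n V := by
  have hC : ∀ k, (⨆ _ : k ∈ Finset.Icc 1 n, |V k|) ≤ ∑ j ∈ Finset.Icc 1 n, |V j| := by
    intro k
    refine Real.iSup_le (fun hk => ?_) (Finset.sum_nonneg fun _ _ => abs_nonneg _)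
    exact Finset.single_le_sum (f := fun j => |V j|) (fun _ _ => abs_nonneg _) hk
  have hbdd : BddAbove (Set.range fun k => ⨆ _ : k ∈ Finset.Icc 1 n, |V k|) :=
    ⟨∑ j ∈ Finset.Icc 1 n, |V j|, by rintro _ ⟨k, rfl⟩; exact hC k⟩
  calc |V i| ≤ ⨆ _ : i ∈ Finset.Icc 1 n, |V i| := by
        exact le_ciSup (f := fun _ : i ∈ Finset.Icc 1 n => |V i|)
          (Set.Finite.bddAbove (Set.finite_range _)) hi
    _ ≤ vnorm n V := le_ciSup hbdd i

lemma secondDerivTest (f : ℝ → ℝ) (x₀ : ℝ) (hx₀ : x₀ ∈ Set.Ioo (0:ℝ) 1)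
    (hdiff : ∀ x ∈ Set.Ioo (0:ℝ) 1, DifferentiableAt ℝ f x)
    (hdiff2 : DifferentiableAt ℝ (deriv f) x₀)
    (hmax : IsLocalMax f x₀) : deriv (deriv f) x₀ ≤ 0 := by
  by_contra hpos
  push_neg at hpos
  have hg0 : deriv f x₀ = 0 := hmax.deriv_eq_zero
  have hslope : Filter.Tendsto (slope (deriv f) x₀) (𝓝[≠] x₀) (𝓝 (deriv (deriv f) x₀)) :=
    hasDerivAt_iff_tendsto_slope.1 hdiff2.hasDerivAt
  have h1 : ∀ᶠ x in 𝓝[>] x₀, 0 < slope (deriv f) x₀ x := by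
    have := hslope.eventually (eventually_gt_nhds hpos)
    exact (this.filter_mono (nhdsWithin_mono _ (fun x hx => ne_of_gt hx)))
  have h1' : ∀ᶠ x in 𝓝[>] x₀, 0 < deriv f x := by
    filter_upwards [h1, self_mem_nhdsWithin] with x hx hx'
    have : 0 < x - x₀ := sub_pos.2 hx'
    have := mul_pos hx this
    rw [slope_def_field] at this
    simp only [hg0, sub_zero] at this
    calc (0:ℝ) < (deriv f x - 0) / (x - x₀) * (x - x₀) := by
          rw [slope_def_field, hg0] at hx
          exact mul_pos hx (sub_pos.2 hx')
      _ = deriv f x := by rw [sub_zero]; field_simp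
  have h2 : ∀ᶠ x in 𝓝[>] x₀, f x ≤ f x₀ := hmax.filter_mono nhdsWithin_le_nhds
  have h3 : ∀ᶠ x in 𝓝[>] x₀, x < 1 :=
    (eventually_lt_nhds hx₀.2).filter_mono nhdsWithin_le_nhds
  obtain ⟨u, hu, hsub⟩ := mem_nhdsGT_iff_exists_Ioo_subset.1 ((h1'.and (h2.and h3)))
  set c := (x₀ + min u 1) / 2 with hc
  have hcx : x₀ < c := by
    have : x₀ < min u 1 := lt_min hu hx₀.2
    simp only [hc]; linarith
  have hcu : c < min u 1 := by
    have : x₀ < min u 1 := lt_min hu hx₀.2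
    simp only [hc]; linarith
  have hcIoo : c ∈ Set.Ioo x₀ u := ⟨hcx, lt_of_lt_of_le hcu (min_le_left _ _)⟩
  have hsm : StrictMonoOn f (Set.Icc x₀ c) := by
    apply strictMonoOn_of_deriv_pos (convex_Icc _ _)
    · intro x hx
      refine (hdiff x ⟨lt_of_lt_of_le hx₀.1 hx.1, ?_⟩).continuousAt.continuousWithinAt
      exact lt_of_le_of_lt hx.2 (lt_of_lt_of_le hcu (min_le_right _ _))
    · intro x hx
      rw [interior_Icc] at hx
      exact (hsub ⟨hx.1, lt_trans hx.2 hcIoo.2⟩).1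
  have hlt : f x₀ < f c := hsm (Set.left_mem_Icc.2 (le_of_lt hcx))
    (Set.right_mem_Icc.2 (le_of_lt hcx)) hcx
  exact absurd (hsub hcIoo).2.1 (not_le.2 hlt)

lemma key_lemma
    (n : ℕ) (hn : 1 ≤ n)
    (ε : ℕ → ℝ) (hε0 : ∀ i, 1 ≤ i → i ≤ n → 0 < ε i)
    (A : ℝ → ℕ → ℕ → ℝ)
    (hAoff : ∀ x ∈ Set.Icc (0:ℝ) 1, ∀ i j, 1 ≤ i → i ≤ n → 1 ≤ j → j ≤ n → i ≠ j → A x i j ≤ 0)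
    (α : ℝ) (hα0 : 0 < α)
    (hα : ∀ x ∈ Set.Icc (0:ℝ) 1, ∀ i, 1 ≤ i → i ≤ n → α < ∑ j ∈ Finset.Icc 1 n, A x i j)
    (ψ : ℝ → ℕ → ℝ)
    (hψc : ∀ i, 1 ≤ i → i ≤ n → ContinuousOn (fun x => ψ x i) (Set.Icc 0 1))
    (hψd : ∀ i, 1 ≤ i → i ≤ n → ∀ x ∈ Set.Ioo (0:ℝ) 1, DifferentiableAt ℝ (fun t => ψ t i) x)
    (hψd2 : ∀ i, 1 ≤ i → i ≤ n → ∀ x ∈ Set.Ioo (0:ℝ) 1,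
      DifferentiableAt ℝ (deriv (fun t => ψ t i)) x)
    (M : ℝ)
    (hM : ∀ x ∈ Set.Ioo (0:ℝ) 1, ∀ i, 1 ≤ i → i ≤ n → |Lop n ε A ψ x i| ≤ M) :
    ∀ i, 1 ≤ i → i ≤ n → ∀ x ∈ Set.Icc (0:ℝ) 1,
      ψ x i ≤ max (max (vnorm n (ψ 0)) (vnorm n (ψ 1))) ((1 / α) * M) := by
  set B := max (max (vnorm n (ψ 0)) (vnorm n (ψ 1))) ((1 / α) * M) with hB
  have h1n : (1 : ℕ) ∈ Finset.Icc 1 n := Finset.mem_Icc.2 ⟨le_refl 1, hn⟩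
  have hB0 : 0 ≤ B := le_trans (abs_nonneg _) (le_trans (vnorm_ge n (ψ 0) h1n)
    (le_max_of_le_left (le_max_left _ _)))
  -- pick maximizers
  have hx : ∀ i : ℕ, ∃ x ∈ Set.Icc (0:ℝ) 1,
      (1 ≤ i → i ≤ n → ∀ y ∈ Set.Icc (0:ℝ) 1, ψ y i ≤ ψ x i) := by
    intro i
    by_cases hi : 1 ≤ i ∧ i ≤ n
    · obtain ⟨x, hx, hmax⟩ := isCompact_Icc.exists_isMaxOn (Set.nonempty_Icc.2 zero_le_one)
        (hψc i hi.1 hi.2)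
      exact ⟨x, hx, fun _ _ y hy => hmax hy⟩
    · exact ⟨0, Set.left_mem_Icc.2 zero_le_one, fun h1 h2 => absurd ⟨h1, h2⟩ hi⟩
  choose xm hxm hxmax using hx
  obtain ⟨i₀, hi₀s, hi₀max⟩ := Finset.exists_max_image (Finset.Icc 1 n)
    (fun i => ψ (xm i) i) ⟨1, h1n⟩
  obtain ⟨hi₀1, hi₀n⟩ := Finset.mem_Icc.1 hi₀s
  set x₀ := xm i₀ with hx₀def
  set m := ψ x₀ i₀ with hm
  have hglobal : ∀ i, 1 ≤ i → i ≤ n → ∀ y ∈ Set.Icc (0:ℝ) 1, ψ y i ≤ m := by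
    intro i h1 h2 y hy
    exact le_trans (hxmax i h1 h2 y hy) (hi₀max i (Finset.mem_Icc.2 ⟨h1, h2⟩))
  suffices hmB : m ≤ B by
    intro i h1 h2 x hx
    exact le_trans (hglobal i h1 h2 x hx) hmB
  have hx₀ : x₀ ∈ Set.Icc (0:ℝ) 1 := hxm i₀
  rcases eq_or_lt_of_le hx₀.1 with h0 | h0
  · -- x₀ = 0
    calc m ≤ |ψ x₀ i₀| := le_abs_self _
      _ ≤ vnorm n (ψ x₀) := vnorm_ge n (ψ x₀) hi₀s
      _ ≤ B := by rw [← h0]; exact le_max_of_le_left (le_max_left _ _)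
  rcases eq_or_lt_of_le hx₀.2 with h1 | h1
  · calc m ≤ |ψ x₀ i₀| := le_abs_self _
      _ ≤ vnorm n (ψ x₀) := vnorm_ge n (ψ x₀) hi₀s
      _ ≤ B := by rw [h1]; exact le_max_of_le_left (le_max_right _ _)
  -- interior case
  have hx₀Ioo : x₀ ∈ Set.Ioo (0:ℝ) 1 := ⟨h0, h1⟩
  rcases le_or_gt m 0 with hm0 | hm0
  · exact le_trans hm0 hB0
  -- local max of f at x₀
  set f := fun t => ψ t i₀ with hf
  have hmax : IsLocalMax f x₀ := by
    have hmem : Set.Icc (0:ℝ) 1 ∈ 𝓝 x₀ := Icc_mem_nhds hx₀Ioo.1 hx₀Ioo.2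
    filter_upwards [hmem] with y hy
    exact hglobal i₀ hi₀1 hi₀n y hy
  have hsec : iteratedDeriv 2 f x₀ ≤ 0 := by
    have := secondDerivTest f x₀ hx₀Ioo (hψd i₀ hi₀1 hi₀n) (hψd2 i₀ hi₀1 hi₀n x₀ hx₀Ioo) hmax
    simpa [iteratedDeriv_succ, iteratedDeriv_one] using this
  have hLle : Lop n ε A ψ x₀ i₀ ≤ M := le_trans (le_abs_self _) (hM x₀ hx₀Ioo i₀ hi₀1 hi₀n)
  have hsum : α * m ≤ ∑ j ∈ Finset.Icc 1 n, A x₀ i₀ j * ψ x₀ j := by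
    have step1 : ∑ j ∈ Finset.Icc 1 n, A x₀ i₀ j * m ≤
        ∑ j ∈ Finset.Icc 1 n, A x₀ i₀ j * ψ x₀ j := by
      apply Finset.sum_le_sum
      intro j hj
      obtain ⟨hj1, hjn⟩ := Finset.mem_Icc.1 hj
      rcases eq_or_ne i₀ j with rfl | hne
      · exact le_refl _
      · exact mul_le_mul_of_nonpos_left (hglobal j hj1 hjn x₀ hx₀)
          (hAoff x₀ hx₀ i₀ j hi₀1 hi₀n hj1 hjn hne)
    calc α * m ≤ (∑ j ∈ Finset.Icc 1 n, A x₀ i₀ j) * m :=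
          mul_le_mul_of_nonneg_right (le_of_lt (hα x₀ hx₀ i₀ hi₀1 hi₀n)) (le_of_lt hm0)
      _ = ∑ j ∈ Finset.Icc 1 n, A x₀ i₀ j * m := by rw [Finset.sum_mul]
      _ ≤ _ := step1
  have hL2 : ∑ j ∈ Finset.Icc 1 n, A x₀ i₀ j * ψ x₀ j ≤ Lop n ε A ψ x₀ i₀ := by
    rw [Lop]
    have h0' : 0 ≤ -(ε i₀) * iteratedDeriv 2 (fun t => ψ t i₀) x₀ := by
      nlinarith [hsec, hε0 i₀ hi₀1 hi₀n]
    linarith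
  have : α * m ≤ M := le_trans hsum (le_trans hL2 hLle)
  have : m ≤ (1 / α) * M := by
    rw [one_div, inv_mul_eq_div, le_div_iff₀ hα0]
    linarith [this]
  exact le_trans this (le_max_right _ _)

theorem stmt1
    (n : ℕ) (hn : 1 ≤ n)
    (ε : ℕ → ℝ) (hε0 : ∀ i, 1 ≤ i → i ≤ n → 0 < ε i)
    (hε1 : ∀ i, 1 ≤ i → i ≤ n → ε i ≤ 1)
    (hεm : ∀ i j, 1 ≤ i → i < j → j ≤ n → ε i < ε j)
    (A : ℝ → ℕ → ℕ → ℝ)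
    (hAc : ∀ i j, 1 ≤ i → i ≤ n → 1 ≤ j → j ≤ n →
      ContinuousOn (fun x => A x i j) (Set.Icc 0 1))
    (hAdiag : ∀ x ∈ Set.Icc (0:ℝ) 1, ∀ i, 1 ≤ i → i ≤ n →
      ∑ j ∈ (Finset.Icc 1 n).erase i, |A x i j| < A x i i)
    (hAoff : ∀ x ∈ Set.Icc (0:ℝ) 1, ∀ i j, 1 ≤ i → i ≤ n → 1 ≤ j → j ≤ n → i ≠ j → A x i j ≤ 0)
    (α : ℝ) (hα0 : 0 < α)
    (hα : ∀ x ∈ Set.Icc (0:ℝ) 1, ∀ i, 1 ≤ i → i ≤ n → α < ∑ j ∈ Finset.Icc 1 n, A x i j)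
    (ψ : ℝ → ℕ → ℝ)
    (hψc : ∀ i, 1 ≤ i → i ≤ n → ContinuousOn (fun x => ψ x i) (Set.Icc 0 1))
    (hψd : ∀ i, 1 ≤ i → i ≤ n → ∀ x ∈ Set.Ioo (0:ℝ) 1, DifferentiableAt ℝ (fun t => ψ t i) x)
    (hψd2 : ∀ i, 1 ≤ i → i ≤ n → ∀ x ∈ Set.Ioo (0:ℝ) 1,
      DifferentiableAt ℝ (deriv (fun t => ψ t i)) x)
    (M : ℝ)
    (hM : ∀ x ∈ Set.Ioo (0:ℝ) 1, ∀ i, 1 ≤ i → i ≤ n → |Lop n ε A ψ x i| ≤ M) :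
    ∀ i, 1 ≤ i → i ≤ n → ∀ x ∈ Set.Icc (0:ℝ) 1,
      |ψ x i| ≤ max (max (vnorm n (ψ 0)) (vnorm n (ψ 1))) ((1 / α) * M) := by
  intro i h1 h2 x hx
  have hupper := key_lemma n hn ε hε0 A hAoff α hα0 hα ψ hψc hψd hψd2 M hM i h1 h2 x hx
  -- apply to -ψ
  set ψn : ℝ → ℕ → ℝ := fun x j => -ψ x j with hψn
  have hvn : ∀ y : ℝ, vnorm n (ψn y) = vnorm n (ψ y) := by
    intro y; simp only [vnorm, hψn, abs_neg]
  have hderiv_eq : ∀ j, deriv (fun t => ψn t j) = fun t => -deriv (fun t => ψ t j) t := by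
    intro j; funext t; exact deriv.neg
  have hLop : ∀ y j, Lop n ε A ψn y j = -Lop n ε A ψ y j := by
    intro y j
    simp only [Lop, hψn, mul_neg]
    rw [iteratedDeriv_fun_neg, Finset.sum_neg_distrib]
    ring
  have hlower := key_lemma n hn ε hε0 A hAoff α hα0 hα ψn
    (fun j hj1 hj2 => (hψc j hj1 hj2).neg)
    (fun j hj1 hj2 y hy => (hψd j hj1 hj2 y hy).neg)
    (fun j hj1 hj2 y hy => by
      rw [hderiv_eq]
      exact (hψd2 j hj1 hj2 y hy).neg)
    M (fun y hy j hj1 hj2 => by rw [hLop, abs_neg]; exact hM y hy j hj1 hj2) i h1 h2 x hx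
  rw [hvn, hvn] at hlower
  simp only [hψn] at hlower
  rw [abs_le]
  exact ⟨by linarith, hupper⟩
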